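/- Let G be a graph with α(G) > 1. Then G is well-covered if and only if for every vertex v, the localization G_v = G − N_G[v] is well-covered and α(G_v) = α(G) − 1. -/
import Mathlib


open Classical

noncomputable section

variable {V : Type*}

/-- `s` is an independent set of `G`. -/
def IndepSet (G : SimpleGraph V) (s : Set V) : Prop :=
  ∀ ⦃a⦄, a ∈ s → ∀ ⦃b⦄, b ∈ s → ¬ G.Adj a b

/-- The independence number `α(G)`. -/
def alphaNum [Fintype V] (G : SimpleGraph V) : ℕ :=
  sSup {n | ∃ s : Set V, IndepSet G s ∧ s.ncard = n}

/-- `s` is a maximal independent set of `G`. -/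
def MaximalIndep (G : SimpleGraph V) (s : Set V) : Prop :=
  IndepSet G s ∧ ∀ t : Set V, IndepSet G t → s ⊆ t → s = t

/-- `G` is well-covered: all maximal independent sets have cardinality `α(G)`. -/
def WellCovered [Fintype V] (G : SimpleGraph V) : Prop :=
  ∀ s : Set V, MaximalIndep G s → s.ncard = alphaNum G

/-- The open neighborhood `N_G(S)` of a set of vertices. -/
def openNbhd (G : SimpleGraph V) (S : Set V) : Set V :=
  {v | v ∉ S ∧ ∃ u ∈ S, G.Adj u v}

/-- The closed neighborhood `N_G[S]`. -/
def closedNbhd (G : SimpleGraph V) (S : Set V) : Set V :=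
  S ∪ openNbhd G S

/-- The vertex set of the localization `G_S = G - N_G[S]`. -/
def localSet (G : SimpleGraph V) (S : Set V) : Set V :=
  (closedNbhd G S)ᶜ

/-- `G` belongs to the class `W_p`. -/
def Wp (p : ℕ) [Fintype V] (G : SimpleGraph V) : Prop :=
  p ≤ Fintype.card V ∧
    ∀ A : Fin p → Set V,
      (∀ i, IndepSet G (A i)) →
      (∀ i j, i ≠ j → Disjoint (A i) (A j)) →
      ∃ S : Fin p → Set V,
        (∀ i j, i ≠ j → Disjoint (S i) (S j)) ∧
        (∀ i, IndepSet G (S i) ∧ (S i).ncard = alphaNum G) ∧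
        (∀ i, A i ⊆ S i)

/-- `G` is `α`-critical: deleting any edge increases the independence number. -/
def AlphaCritical [Fintype V] (G : SimpleGraph V) : Prop :=
  ∀ a b : V, G.Adj a b → alphaNum G < alphaNum (G.deleteEdges {s(a, b)})

/-- The vertex set of `G_{ab} = G - (N_G(a) ∪ N_G(b))`. -/
def edgeLocalSet (G : SimpleGraph V) (a b : V) : Set V :=
  (G.neighborSet a ∪ G.neighborSet b)ᶜ

section Aux

lemma ncard_le_card [Fintype V] (s : Set V) : s.ncard ≤ Fintype.card V := by
  simpa [Set.ncard_univ] using Set.ncard_le_ncard (Set.subset_univ s) Set.finite_univ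

lemma alpha_bdd [Fintype V] (G : SimpleGraph V) :
    BddAbove {n | ∃ s : Set V, IndepSet G s ∧ s.ncard = n} := by
  refine ⟨Fintype.card V, ?_⟩
  rintro n ⟨s, -, rfl⟩
  exact ncard_le_card s

lemma indep_ncard_le [Fintype V] (G : SimpleGraph V) {s : Set V} (hs : IndepSet G s) :
    s.ncard ≤ alphaNum G :=
  le_csSup (alpha_bdd G) ⟨s, hs, rfl⟩

lemma exists_alpha_set [Fintype V] (G : SimpleGraph V) :
    ∃ s : Set V, IndepSet G s ∧ s.ncard = alphaNum G := by
  have hne : ({n | ∃ s : Set V, IndepSet G s ∧ s.ncard = n} : Set ℕ).Nonempty :=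
    ⟨0, ∅, by intro a ha; exact absurd ha (Set.notMem_empty a), by simp⟩
  exact Nat.sSup_mem hne (alpha_bdd G)

lemma exists_maximal_ext [Fintype V] (G : SimpleGraph V) {s : Set V} (hs : IndepSet G s) :
    ∃ t, MaximalIndep G t ∧ s ⊆ t := by
  set T : Set ℕ := {n | ∃ t : Set V, (IndepSet G t ∧ s ⊆ t) ∧ t.ncard = n} with hT
  have hne : T.Nonempty := ⟨s.ncard, s, ⟨hs, subset_rfl⟩, rfl⟩
  have hbdd : BddAbove T := by
    refine ⟨Fintype.card V, ?_⟩; rintro n ⟨t, -, rfl⟩; exact ncard_le_card t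
  obtain ⟨t, ⟨ht, hst⟩, htn⟩ := Nat.sSup_mem hne hbdd
  refine ⟨t, ⟨ht, fun u hu htu => ?_⟩, hst⟩
  refine Set.eq_of_subset_of_ncard_le htu ?_ (Set.toFinite u)
  calc u.ncard ≤ sSup T := le_csSup hbdd ⟨u, ⟨hu, hst.trans htu⟩, rfl⟩
    _ = t.ncard := htn.symm

lemma mem_localSet {G : SimpleGraph V} {v w : V} :
    w ∈ localSet G {v} ↔ w ≠ v ∧ ¬ G.Adj v w := by
  simp only [localSet, closedNbhd, openNbhd, Set.mem_compl_iff, Set.mem_union,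
    Set.mem_singleton_iff, Set.mem_setOf_eq, exists_eq_left]
  tauto

variable [Fintype V] {G : SimpleGraph V} {v : V}


lemma indep_image {s' : Set ↥(localSet G {v})} (hs' : IndepSet (G.induce (localSet G {v})) s') :
    IndepSet G (Subtype.val '' s') := by
  rintro a ⟨a', ha', rfl⟩ b ⟨b', hb', rfl⟩ hab
  exact hs' ha' hb' (by simpa using hab)

lemma indep_preimage {s : Set V} (hs : IndepSet G s) :
    IndepSet (G.induce (localSet G {v})) (Subtype.val ⁻¹' s) := by
  intro a ha b hb hab
  exact hs ha hb (by simpa using hab)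

lemma indep_insert {s' : Set ↥(localSet G {v})} (hs' : IndepSet (G.induce (localSet G {v})) s') :
    IndepSet G (insert v (Subtype.val '' s')) := by
  have him := indep_image hs'
  rintro a ha b hb hab
  rcases ha with rfl | ha
  · rcases hb with rfl | hb
    · exact G.irrefl hab
    · obtain ⟨b', hb', rfl⟩ := hb
      exact (mem_localSet.mp b'.2).2 hab
  · rcases hb with rfl | hb
    · obtain ⟨a', ha', rfl⟩ := ha
      exact (mem_localSet.mp a'.2).2 hab.symm
    · exact him ha hb hab

lemma M1 {s' : Set ↥(localSet G {v})} (hs' : MaximalIndep (G.induce (localSet G {v})) s') :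
    MaximalIndep G (insert v (Subtype.val '' s')) := by
  obtain ⟨hind, hmax⟩ := hs'
  refine ⟨indep_insert hind, fun t ht hsub => ?_⟩
  have hvt : v ∈ t := hsub (Set.mem_insert _ _)
  have htW : ∀ w ∈ t, w ≠ v → w ∈ (localSet G {v}) := by
    intro w hw hwv
    exact mem_localSet.mpr ⟨hwv, fun hadj => ht hvt hw hadj⟩
  have ht' : IndepSet (G.induce (localSet G {v})) (Subtype.val ⁻¹' t) := indep_preimage ht
  have hsub' : s' ⊆ Subtype.val ⁻¹' t := by
    intro a ha
    exact hsub (Set.mem_insert_of_mem _ ⟨a, ha, rfl⟩)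
  have heq := hmax _ ht' hsub'
  apply Set.Subset.antisymm hsub
  intro w hw
  by_cases hwv : w = v
  · exact Set.mem_insert_iff.mpr (Or.inl hwv)
  · have hwW : w ∈ (localSet G {v}) := htW w hw hwv
    have : (⟨w, hwW⟩ : ↥(localSet G {v})) ∈ s' := heq ▸ hw
    exact Set.mem_insert_of_mem _ ⟨⟨w, hwW⟩, this, rfl⟩

lemma M2 {s : Set V} (hs : MaximalIndep G s) (hv : v ∈ s) :
    MaximalIndep (G.induce (localSet G {v})) (Subtype.val ⁻¹' s) ∧
      Subtype.val '' (Subtype.val ⁻¹' s : Set ↥(localSet G {v})) = s \ {v} := by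
  obtain ⟨hind, hmax⟩ := hs
  have himg : Subtype.val '' (Subtype.val ⁻¹' s : Set ↥(localSet G {v})) = s \ {v} := by
    ext w
    constructor
    · rintro ⟨w', hw', rfl⟩
      exact ⟨hw', (mem_localSet.mp w'.2).1⟩
    · rintro ⟨hws, hwv⟩
      have hwW : w ∈ (localSet G {v}) :=
        mem_localSet.mpr ⟨hwv, fun hadj => hind hv hws hadj⟩
      exact ⟨⟨w, hwW⟩, hws, rfl⟩
  refine ⟨⟨indep_preimage hind, fun t' ht' hsub' => ?_⟩, himg⟩
  have hTind : IndepSet G (insert v (Subtype.val '' t')) := indep_insert ht'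
  have hsT : s ⊆ insert v (Subtype.val '' t') := by
    intro w hw
    by_cases hwv : w = v
    · exact Set.mem_insert_iff.mpr (Or.inl hwv)
    · have : w ∈ Subtype.val '' (Subtype.val ⁻¹' s : Set ↥(localSet G {v})) := himg ▸ ⟨hw, hwv⟩
      obtain ⟨w', hw', rfl⟩ := this
      exact Set.mem_insert_of_mem _ ⟨w', hsub' hw', rfl⟩
  have heq := hmax _ hTind hsT
  apply Set.Subset.antisymm hsub'
  intro a ha
  have : (a : V) ∈ s := by
    rw [heq]
    exact Set.mem_insert_of_mem _ ⟨a, ha, rfl⟩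
  exact this

end Aux

theorem stmt5 [Fintype V] (G : SimpleGraph V) (h : 1 < alphaNum G) :
    WellCovered G ↔
      ∀ v : V, WellCovered (G.induce (localSet G {v})) ∧
        alphaNum (G.induce (localSet G {v})) = alphaNum G - 1 := by
  constructor
  · intro hWC v
    have key : ∀ s' : Set ↥(localSet G {v}), MaximalIndep (G.induce (localSet G {v})) s' →
        s'.ncard = alphaNum G - 1 := by
      intro s' hs'
      have hc := hWC _ (M1 hs')
      have hvnot : v ∉ (Subtype.val '' s' : Set V) := by
        rintro ⟨a, ha, hav⟩
        exact (mem_localSet.mp a.2).1 hav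
      have hins : (insert v (Subtype.val '' s')).ncard = (Subtype.val '' s').ncard + 1 :=
        Set.ncard_insert_of_notMem hvnot (Set.toFinite _)
      have himg : (Subtype.val '' s').ncard = s'.ncard :=
        Set.ncard_image_of_injective _ Subtype.val_injective
      omega
    obtain ⟨t', ht', htc⟩ := exists_alpha_set (G.induce (localSet G {v}))
    obtain ⟨u', hu', htu'⟩ := exists_maximal_ext _ ht'
    have h1 : u'.ncard = alphaNum G - 1 := key u' hu'
    have h2 : alphaNum (G.induce (localSet G {v})) ≤ u'.ncard := by
      rw [← htc]; exact Set.ncard_le_ncard htu' (Set.toFinite _)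
    have h3 : u'.ncard ≤ alphaNum (G.induce (localSet G {v})) := indep_ncard_le _ hu'.1
    have ha : alphaNum (G.induce (localSet G {v})) = alphaNum G - 1 := by omega
    exact ⟨fun s' hs' => (key s' hs').trans ha.symm, ha⟩
  · intro hyp s hs
    obtain ⟨t, ht, htc⟩ := exists_alpha_set G
    have hsne : s.Nonempty := by
      rcases Set.eq_empty_or_nonempty s with rfl | hne
      · rw [← hs.2 t ht (Set.empty_subset t)] at htc
        simp at htc
        omega
      · exact hne
    obtain ⟨v, hv⟩ := hsne
    obtain ⟨hWCv, ha⟩ := hyp v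
    obtain ⟨hm, himg⟩ := M2 hs hv
    have h1 := hWCv _ hm
    have h2 : (s \ {v}).ncard = (Subtype.val ⁻¹' s : Set ↥(localSet G {v})).ncard := by
      rw [← himg]
      exact Set.ncard_image_of_injective _ Subtype.val_injective
    have h3 : (s \ {v}).ncard + 1 = s.ncard :=
      Set.ncard_diff_singleton_add_one hv (Set.toFinite s)
    omega
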